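/- For all x, y ∈ ℝ the infinite product ρ_x(y) = ∏_{n≥1} f′(f⁻ⁿ(x))/f′(f⁻ⁿ(y)) converges (i.e. the partial products ∏_{n=1}^{N} f′(f⁻ⁿ(x))/f′(f⁻ⁿ(y)) have a limit as N → ∞), its value is a strictly positive real number, and the function (x, y) ↦ ρ_x(y) is continuous on ℝ × ℝ. -/

import Mathlib

open Filter Real


/-- For a differentiable bijection `f : ℝ → ℝ` with α-Hölder
derivative satisfying `1 < λ₋ ≤ f′ ≤ λ₊`, the infinite product
`ρ_x(y) = ∏_{n ≥ 1} f′(f⁻ⁿ(x))/f′(f⁻ⁿ(y))` converges, is strictly positive,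
and `(x, y) ↦ ρ_x(y)` is continuous on `ℝ × ℝ`. -/
theorem stmt6
    (f : ℝ → ℝ) (hbij : Function.Bijective f)
    (hdiff : Differentiable ℝ f)
    (H α : ℝ) (hH : 0 ≤ H) (hα0 : 0 < α) (hα1 : α ≤ 1)
    (hHolder : ∀ x y : ℝ, |deriv f x - deriv f y| ≤ H * |x - y| ^ α)
    (lamm lamp : ℝ) (hlamm : 1 < lamm)
    (hderiv : ∀ x : ℝ, lamm ≤ deriv f x ∧ deriv f x ≤ lamp) :
    ∃ ρ : ℝ → ℝ → ℝ,
      Continuous (fun p : ℝ × ℝ => ρ p.1 p.2) ∧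
      ∀ x y : ℝ, 0 < ρ x y ∧
        Filter.Tendsto
          (fun N : ℕ => ∏ n ∈ Finset.Icc 1 N,
            deriv f ((Function.invFun f)^[n] x) / deriv f ((Function.invFun f)^[n] y))
          Filter.atTop (nhds (ρ x y)) := by
  set g := Function.invFun f with hgdef
  have hfg : ∀ x, f (g x) = x := fun x => Function.rightInverse_invFun hbij.2 x
  have hlamm0 : (0:ℝ) < lamm := lt_trans one_pos hlamm
  have hinv0 : (0:ℝ) ≤ lamm⁻¹ := le_of_lt (inv_pos.mpr hlamm0)
  have hpos : ∀ x, 0 < deriv f x := fun x => lt_of_lt_of_le hlamm0 (hderiv x).1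
  -- f expands by factor lamm
  have hmono : ∀ u v : ℝ, u ≤ v → lamm * (v - u) ≤ f v - f u := by
    intro u v huv
    have hdh : Differentiable ℝ (fun x => f x - lamm * x) :=
      hdiff.sub ((differentiable_id).const_mul lamm)
    have hd' : ∀ x, 0 ≤ deriv (fun x => f x - lamm * x) x := by
      intro x
      have h1 : HasDerivAt (fun x => f x - lamm * x) (deriv f x - lamm * 1) x :=
        (hdiff x).hasDerivAt.sub ((hasDerivAt_id x).const_mul lamm)
      rw [h1.deriv]
      have := (hderiv x).1
      linarith
    have hm := monotone_of_deriv_nonneg hdh hd' huv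
    simp only at hm
    linarith
  have habs : ∀ u v : ℝ, lamm * |u - v| ≤ |f u - f v| := by
    intro u v
    rcases le_total u v with h | h
    · have := hmono u v h
      rw [abs_of_nonpos (by linarith : u - v ≤ 0),
        abs_of_nonpos (by nlinarith : f u - f v ≤ 0)]
      linarith
    · have := hmono v u h
      rw [abs_of_nonneg (by linarith : (0:ℝ) ≤ u - v),
        abs_of_nonneg (by nlinarith : (0:ℝ) ≤ f u - f v)]
      linarith
  -- g is Lipschitz
  have hglip : ∀ a b : ℝ, |g a - g b| ≤ lamm⁻¹ * |a - b| := by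
    intro a b
    have := habs (g a) (g b)
    rw [hfg, hfg] at this
    rw [inv_mul_eq_div, le_div_iff₀ hlamm0]
    nlinarith [abs_nonneg (g a - g b)]
  have hgC : Continuous g := by
    have : LipschitzWith (Real.toNNReal lamm⁻¹) g := by
      apply LipschitzWith.of_dist_le_mul
      intro a b
      rw [Real.dist_eq, Real.dist_eq, Real.coe_toNNReal _ hinv0]
      exact hglip a b
    exact this.continuous
  -- iterate bound
  have hiter : ∀ (n : ℕ) (x y : ℝ), |g^[n] x - g^[n] y| ≤ lamm⁻¹ ^ n * |x - y| := by
    intro n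
    induction n with
    | zero => intro x y; simp
    | succ n ih =>
      intro x y
      rw [Function.iterate_succ_apply, Function.iterate_succ_apply]
      calc |g^[n] (g x) - g^[n] (g y)| ≤ lamm⁻¹ ^ n * |g x - g y| := ih _ _
        _ ≤ lamm⁻¹ ^ n * (lamm⁻¹ * |x - y|) := by
            apply mul_le_mul_of_nonneg_left (hglip x y) (pow_nonneg hinv0 n)
        _ = lamm⁻¹ ^ (n+1) * |x - y| := by ring
  -- continuity of deriv f
  have hcd : Continuous (deriv f) := by
    rw [continuous_iff_continuousAt]
    intro x
    have h1 : Filter.Tendsto (fun y => deriv f y - deriv f x) (nhds x) (nhds 0) := by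
      rw [tendsto_zero_iff_abs_tendsto_zero]
      apply squeeze_zero (fun y => abs_nonneg _) (fun y => hHolder y x)
      have hc : Continuous (fun y : ℝ => H * |y - x| ^ α) := by
        apply continuous_const.mul
        exact (continuous_abs.comp (continuous_sub_right x)).rpow_const
          (fun y => Or.inr hα0.le)
      have h0 : H * |x - x| ^ α = 0 := by
        simp [Real.zero_rpow hα0.ne']
      simpa [sub_self, abs_zero, Real.zero_rpow hα0.ne'] using hc.tendsto x
    have := h1.add_const (deriv f x)
    simpa [ContinuousAt] using this
  -- log is Lipschitz on [lamm, ∞)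
  have hlogkey : ∀ a b : ℝ, lamm ≤ a → lamm ≤ b → b ≤ a →
      Real.log a - Real.log b ≤ lamm⁻¹ * (a - b) := by
    intro a b ha hb hba
    have ha0 : (0:ℝ) < a := lt_of_lt_of_le hlamm0 ha
    have hb0 : (0:ℝ) < b := lt_of_lt_of_le hlamm0 hb
    have h1 := Real.log_le_sub_one_of_pos (div_pos ha0 hb0)
    rw [Real.log_div ha0.ne' hb0.ne'] at h1
    have h2 : a / b - 1 = (a - b) / b := by field_simp
    have h3 : (a - b) / b ≤ (a - b) / lamm :=
      div_le_div_of_nonneg_left (by linarith) hlamm0 hb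
    rw [inv_mul_eq_div]
    linarith
  have hlog : ∀ a b : ℝ, lamm ≤ a → lamm ≤ b →
      |Real.log a - Real.log b| ≤ lamm⁻¹ * |a - b| := by
    intro a b ha hb
    rcases le_total b a with h | h
    · rw [abs_of_nonneg (by linarith : (0:ℝ) ≤ a - b),
        abs_of_nonneg (sub_nonneg.mpr (Real.log_le_log (lt_of_lt_of_le hlamm0 hb) h))]
      exact hlogkey a b ha hb h
    · rw [abs_of_nonpos (by linarith : a - b ≤ 0),
        abs_of_nonpos (sub_nonpos.mpr (Real.log_le_log (lt_of_lt_of_le hlamm0 ha) h))]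
      have := hlogkey b a hb ha h
      linarith
  -- the series terms
  set F : ℕ → ℝ × ℝ → ℝ := fun n p =>
    Real.log (deriv f (g^[n+1] p.1)) - Real.log (deriv f (g^[n+1] p.2)) with hFdef
  have hFc : ∀ n, Continuous (F n) := by
    intro n
    have hlogc : ∀ h : ℝ × ℝ → ℝ, Continuous h → (∀ p, 0 < h p) →
        Continuous (fun p => Real.log (h p)) := by
      intro h hc hp
      exact Real.continuousOn_log.comp_continuous hc (fun p => by
        simp only [Set.mem_compl_iff, Set.mem_singleton_iff]
        exact (hp p).ne')
    apply Continuous.sub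
    · exact hlogc _ (hcd.comp ((hgC.iterate (n+1)).comp continuous_fst)) (fun p => hpos _)
    · exact hlogc _ (hcd.comp ((hgC.iterate (n+1)).comp continuous_snd)) (fun p => hpos _)
  set r : ℝ := lamm⁻¹ ^ α with hrdef
  have hr0 : 0 ≤ r := Real.rpow_nonneg hinv0 α
  have hr1 : r < 1 := Real.rpow_lt_one hinv0 (inv_lt_one_of_one_lt₀ hlamm) hα0
  -- pow/rpow interchange
  have hpowr : ∀ n : ℕ, ((lamm⁻¹ : ℝ) ^ n) ^ α = r ^ n := by
    intro n
    rw [← Real.rpow_natCast lamm⁻¹ n, ← Real.rpow_mul hinv0, mul_comm,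
      Real.rpow_mul hinv0, Real.rpow_natCast]
  -- main bound
  have hFb : ∀ (M : ℝ), 0 ≤ M → ∀ (n : ℕ) (p : ℝ × ℝ), |p.1 - p.2| ≤ M →
      |F n p| ≤ (lamm⁻¹ * H * M ^ α) * r ^ (n+1) := by
    intro M hM n p hpM
    have hA := hiter (n+1) p.1 p.2
    have h1 : |F n p| ≤ lamm⁻¹ * |deriv f (g^[n+1] p.1) - deriv f (g^[n+1] p.2)| :=
      hlog _ _ (hderiv _).1 (hderiv _).1
    have h2 : |deriv f (g^[n+1] p.1) - deriv f (g^[n+1] p.2)| ≤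
        H * |g^[n+1] p.1 - g^[n+1] p.2| ^ α := hHolder _ _
    have h3 : |g^[n+1] p.1 - g^[n+1] p.2| ^ α ≤ (lamm⁻¹ ^ (n+1) * M) ^ α := by
      apply Real.rpow_le_rpow (abs_nonneg _) _ hα0.le
      calc |g^[n+1] p.1 - g^[n+1] p.2| ≤ lamm⁻¹ ^ (n+1) * |p.1 - p.2| := hA
        _ ≤ lamm⁻¹ ^ (n+1) * M := mul_le_mul_of_nonneg_left hpM (pow_nonneg hinv0 _)
    have h4 : ((lamm⁻¹:ℝ) ^ (n+1) * M) ^ α = r ^ (n+1) * M ^ α := by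
      rw [Real.mul_rpow (pow_nonneg hinv0 _) hM, hpowr]
    calc |F n p| ≤ lamm⁻¹ * (H * |g^[n+1] p.1 - g^[n+1] p.2| ^ α) := by
          refine h1.trans (mul_le_mul_of_nonneg_left h2 hinv0)
      _ ≤ lamm⁻¹ * (H * ((lamm⁻¹ ^ (n+1) * M) ^ α)) := by
          apply mul_le_mul_of_nonneg_left _ hinv0
          exact mul_le_mul_of_nonneg_left h3 hH
      _ = (lamm⁻¹ * H * M ^ α) * r ^ (n+1) := by rw [h4]; ring
  have hsummable : ∀ C : ℝ, Summable (fun n : ℕ => C * r ^ (n+1)) := by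
    intro C
    have := (summable_geometric_of_lt_one hr0 hr1).mul_left (C * r)
    apply this.congr
    intro n
    ring
  -- summability of F at each point
  have hFsum : ∀ p : ℝ × ℝ, Summable (fun n => F n p) := by
    intro p
    apply Summable.of_norm_bounded (hsummable (lamm⁻¹ * H * |p.1 - p.2| ^ α))
    intro n
    rw [Real.norm_eq_abs]
    exact hFb _ (abs_nonneg _) n p le_rfl
  set S : ℝ × ℝ → ℝ := fun p => ∑' n, F n p with hSdef
  have hScont : Continuous S := by
    rw [continuous_iff_continuousAt]
    intro p₀
    set M : ℝ := |p₀.1 - p₀.2| + 2 with hMdef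
    have hM0 : 0 ≤ M := by positivity
    have hball : ∀ p ∈ Metric.ball p₀ 1, |p.1 - p.2| ≤ M := by
      intro p hp
      rw [Metric.mem_ball, Prod.dist_eq] at hp
      have h1 : dist p.1 p₀.1 < 1 := lt_of_le_of_lt (le_max_left _ _) hp
      have h2 : dist p.2 p₀.2 < 1 := lt_of_le_of_lt (le_max_right _ _) hp
      rw [Real.dist_eq] at h1 h2
      have : |p.1 - p.2| ≤ |p.1 - p₀.1| + |p₀.1 - p₀.2| + |p₀.2 - p.2| := by
        calc |p.1 - p.2| = |(p.1 - p₀.1) + (p₀.1 - p₀.2) + (p₀.2 - p.2)| := by ring_nf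
          _ ≤ _ := by
            refine (abs_add_le _ _).trans ?_
            have := abs_add_le (p.1 - p₀.1) (p₀.1 - p₀.2)
            linarith
      rw [abs_sub_comm p₀.2 p.2] at this
      linarith
    have hco : ContinuousOn S (Metric.ball p₀ 1) := by
      apply continuousOn_tsum (fun n => (hFc n).continuousOn)
        (hsummable (lamm⁻¹ * H * M ^ α))
      intro n p hp
      rw [Real.norm_eq_abs]
      exact hFb M hM0 n p (hball p hp)
    exact hco.continuousAt (Metric.ball_mem_nhds p₀ one_pos)
  refine ⟨fun x y => Real.exp (S (x, y)), ?_, ?_⟩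
  · exact Real.continuous_exp.comp hScont
  · intro x y
    refine ⟨Real.exp_pos _, ?_⟩
    have hts : Filter.Tendsto (fun N => ∑ n ∈ Finset.range N, F n (x, y))
        Filter.atTop (nhds (S (x, y))) := (hFsum (x, y)).hasSum.tendsto_sum_nat
    have hprod : ∀ N : ℕ, (∏ n ∈ Finset.Icc 1 N,
        deriv f (g^[n] x) / deriv f (g^[n] y)) =
        Real.exp (∑ n ∈ Finset.range N, F n (x, y)) := by
      intro N
      induction N with
      | zero => simp
      | succ N ih =>
        rw [Finset.prod_Icc_succ_top (Nat.succ_le_succ (Nat.zero_le N)),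
          Finset.sum_range_succ, Real.exp_add, ih]
        congr 1
        rw [hFdef]
        simp only
        rw [Real.exp_sub, Real.exp_log (hpos _), Real.exp_log (hpos _)]
    have := (Real.continuous_exp.tendsto _).comp hts
    simp only [Function.comp_def] at this
    convert this using 2 with N
    exact hprod N
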